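/- Let g : ℝⁿ → ℝ be a nonnegative, measurable, positively homogeneous function of degree d > 0 whose sublevel set G₁ = {x : g(x) ≤ 1} has finite Lebesgue measure. Then ∫_{ℝⁿ} exp(−g(x)) dx = Γ(1 + n/d) · vol(G₁), where Γ is the Gamma function. -/

import Mathlib

open MeasureTheory
open scoped Pointwise

theorem integral_exp_neg_eq_gamma_mul_volume
    (n : ℕ) (d : ℝ) (hd : 0 < d)
    (g : (Fin n → ℝ) → ℝ) (hmeas : Measurable g) (h0 : ∀ x, 0 ≤ g x)
    (hhom : ∀ c : ℝ, 0 ≤ c → ∀ x, g (c • x) = c ^ d * g x)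
    (hfin : volume {x : Fin n → ℝ | g x ≤ 1} < ⊤) :
    ∫ x : Fin n → ℝ, Real.exp (-(g x)) =
      Real.Gamma (1 + (n : ℝ) / d) * (volume {x : Fin n → ℝ | g x ≤ 1}).toReal := by
  set V := volume {x : Fin n → ℝ | g x ≤ 1} with hVdef
  -- Scaling of sublevel sets
  have hscale : ∀ s : ℝ, 0 < s → volume {x : Fin n → ℝ | g x ≤ s}
      = ENNReal.ofReal (s ^ ((n : ℝ) / d)) * V := by
    intro s hs
    have hc : (0:ℝ) < s ^ (1/d) := Real.rpow_pos_of_pos hs _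
    have hset : {x : Fin n → ℝ | g x ≤ s} = (s ^ (1/d)) • {x : Fin n → ℝ | g x ≤ 1} := by
      ext x
      rw [Set.mem_smul_set_iff_inv_smul_mem₀ hc.ne']
      simp only [Set.mem_setOf_eq]
      rw [hhom _ (by positivity)]
      have h1 : ((s ^ (1/d))⁻¹) ^ d = s⁻¹ := by
        rw [← Real.rpow_neg hs.le, ← Real.rpow_mul hs.le,
          show -(1/d) * d = -1 by field_simp, Real.rpow_neg_one]
      rw [h1, inv_mul_le_iff₀ hs, mul_one]
    rw [hset, Measure.addHaar_smul]
    congr 2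
    have hfr : (Module.finrank ℝ (Fin n → ℝ)) = n := by simp
    rw [hfr, abs_of_pos (pow_pos hc n), ← Real.rpow_natCast (s ^ (1/d)) n,
      ← Real.rpow_mul hs.le]
    congr 1
    field_simp
  have hpos : (0:ℝ) < 1 + (n : ℝ) / d := by positivity
  -- Tonelli / layer cake
  have hS : MeasurableSet {p : (Fin n → ℝ) × ℝ | g p.1 ≤ p.2} :=
    measurableSet_le (hmeas.comp measurable_fst) measurable_snd
  have hh : Measurable fun p : (Fin n → ℝ) × ℝ => ENNReal.ofReal (Real.exp (-p.2)) :=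
    ENNReal.measurable_ofReal.comp (Real.measurable_exp.comp measurable_snd.neg)
  have hkey : ∫⁻ x : Fin n → ℝ, ENNReal.ofReal (Real.exp (-(g x)))
      = ∫⁻ s in Set.Ioi (0:ℝ),
          ENNReal.ofReal (Real.exp (-s)) * volume {x : Fin n → ℝ | g x ≤ s} := by
    have hswap := lintegral_lintegral_swap (μ := (volume : Measure (Fin n → ℝ)))
      (ν := volume.restrict (Set.Ioi (0:ℝ)))
      (f := fun x s => Set.indicator {p : (Fin n → ℝ) × ℝ | g p.1 ≤ p.2}
        (fun p => ENNReal.ofReal (Real.exp (-p.2))) (x, s))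
      ((hh.indicator hS).aemeasurable)
    have hinner : ∀ x : Fin n → ℝ,
        (∫⁻ s in Set.Ioi (0:ℝ), Set.indicator {p : (Fin n → ℝ) × ℝ | g p.1 ≤ p.2}
          (fun p => ENNReal.ofReal (Real.exp (-p.2))) (x, s))
        = ENNReal.ofReal (Real.exp (-(g x))) := by
      intro x
      have h1 : (fun s : ℝ => Set.indicator {p : (Fin n → ℝ) × ℝ | g p.1 ≤ p.2}
          (fun p => ENNReal.ofReal (Real.exp (-p.2))) (x, s))
          = (Set.Ici (g x)).indicator (fun s => ENNReal.ofReal (Real.exp (-s))) := by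
        ext s
        simp [Set.indicator_apply, Set.mem_setOf_eq, Set.mem_Ici]
      rw [h1, lintegral_indicator measurableSet_Ici,
        Measure.restrict_restrict measurableSet_Ici]
      have hae : (Set.Ici (g x) ∩ Set.Ioi (0:ℝ) : Set ℝ) =ᵐ[volume] Set.Ioi (g x) := by
        have h2 : (Set.Ici (g x) ∩ Set.Ioi (0:ℝ)) \ Set.Ioi (g x) ⊆ {g x} := by
          intro s hs
          simp only [Set.mem_diff, Set.mem_inter_iff, Set.mem_Ici, Set.mem_Ioi,
            not_lt, Set.mem_singleton_iff] at *
          linarith [hs.1.1, hs.2]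
        have h3 : Set.Ioi (g x) ⊆ Set.Ici (g x) ∩ Set.Ioi (0:ℝ) := fun s hs =>
          ⟨Set.mem_Ici.mpr (le_of_lt (Set.mem_Ioi.mp hs)), Set.mem_Ioi.mpr (lt_of_le_of_lt (h0 x) (Set.mem_Ioi.mp hs))⟩
        rw [MeasureTheory.ae_eq_set]
        refine ⟨measure_mono_null h2 Real.volume_singleton, ?_⟩
        rw [Set.diff_eq_empty.mpr h3]
        simp
      rw [Measure.restrict_congr_set hae]
      have hint : IntegrableOn (fun s : ℝ => Real.exp (-s)) (Set.Ioi (g x)) := by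
        simpa using exp_neg_integrableOn_Ioi (g x) one_pos
      rw [← ofReal_integral_eq_lintegral_ofReal hint
        (Filter.Eventually.of_forall fun s => (Real.exp_pos _).le),
        integral_exp_neg_Ioi]
    calc ∫⁻ x : Fin n → ℝ, ENNReal.ofReal (Real.exp (-(g x)))
        = ∫⁻ x : Fin n → ℝ, ∫⁻ s in Set.Ioi (0:ℝ),
            Set.indicator {p : (Fin n → ℝ) × ℝ | g p.1 ≤ p.2}
              (fun p => ENNReal.ofReal (Real.exp (-p.2))) (x, s) := by
          exact (lintegral_congr hinner).symm
      _ = ∫⁻ s in Set.Ioi (0:ℝ), ∫⁻ x : Fin n → ℝ,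
            Set.indicator {p : (Fin n → ℝ) × ℝ | g p.1 ≤ p.2}
              (fun p => ENNReal.ofReal (Real.exp (-p.2))) (x, s) := hswap
      _ = ∫⁻ s in Set.Ioi (0:ℝ),
            ENNReal.ofReal (Real.exp (-s)) * volume {x : Fin n → ℝ | g x ≤ s} := by
          apply lintegral_congr
          intro s
          have h1 : (fun x : Fin n → ℝ => Set.indicator {p : (Fin n → ℝ) × ℝ | g p.1 ≤ p.2}
              (fun p => ENNReal.ofReal (Real.exp (-p.2))) (x, s))
              = {x : Fin n → ℝ | g x ≤ s}.indicator
                  (fun _ => ENNReal.ofReal (Real.exp (-s))) := by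
            ext x
            simp [Set.indicator_apply, Set.mem_setOf_eq]
          rw [h1]
          exact lintegral_indicator_const
            (show MeasurableSet {x : Fin n → ℝ | g x ≤ s} from hmeas measurableSet_Iic) _
  have hI : ∫⁻ x : Fin n → ℝ, ENNReal.ofReal (Real.exp (-(g x)))
      = ENNReal.ofReal (Real.Gamma (1 + (n : ℝ) / d)) * V := by
    rw [hkey]
    have h1 : ∀ s ∈ Set.Ioi (0:ℝ),
        ENNReal.ofReal (Real.exp (-s)) * volume {x : Fin n → ℝ | g x ≤ s}
        = ENNReal.ofReal (Real.exp (-s) * s ^ ((n : ℝ) / d)) * V := by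
      intro s hs
      rw [hscale s hs, ENNReal.ofReal_mul (Real.exp_pos _).le, mul_assoc]
    rw [setLIntegral_congr_fun measurableSet_Ioi h1,
      lintegral_mul_const _ (by fun_prop)]
    congr 1
    have hgam : Real.Gamma (1 + (n : ℝ) / d)
        = ∫ s in Set.Ioi (0:ℝ), Real.exp (-s) * s ^ ((n : ℝ) / d) := by
      rw [Real.Gamma_eq_integral hpos]
      congr 1
      ext s
      norm_num
    rw [hgam, ofReal_integral_eq_lintegral_ofReal]
    · have : IntegrableOn (fun s : ℝ => Real.exp (-s) * s ^ ((1 + (n:ℝ)/d) - 1))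
        (Set.Ioi (0:ℝ)) := Real.GammaIntegral_convergent hpos
      simpa [IntegrableOn] using this
    · filter_upwards [ae_restrict_mem measurableSet_Ioi] with s hs
      have : (0:ℝ) < s := hs
      positivity
  rw [integral_eq_lintegral_of_nonneg_ae (f := fun x => Real.exp (-(g x)))
      (Filter.Eventually.of_forall fun x => (Real.exp_pos _).le)
      ((Real.measurable_exp.comp hmeas.neg).aestronglyMeasurable),
    hI, ENNReal.toReal_mul, ENNReal.toReal_ofReal (Real.Gamma_pos_of_pos hpos).le]
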